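/- Let μ₀, λ₀, ω₀, β₀, μ₁, α₁, λ₁ ∈ ℝ with μ₁ > 0 and λ₁ + (2/3)μ₁ > 0. On M₃ define C₁ := 2μ₁·sym₀ + 2α₁·skew + (3λ₁+2μ₁)·ℙ; let Sym ⊆ M₃ be the symmetric matrices with inclusion ι : Sym → M₃, and define C₀ := ι*∘(2μ₀·sym₀ + (3λ₀+2μ₀)·ℙ)∘ι ∈ L(Sym) and G₀ := ι*∘(2ω₀·sym₀ + (3β₀+2ω₀)·ℙ) ∈ L(M₃, Sym). Then the operator on M₃ given by ι∘C₀∘ι* + G₀*∘ι* + ι∘G₀ + C₁ − (ι∘G₀∘ι + C₁∘ι)∘(ι*∘C₁∘ι)⁻¹∘(ι*∘G₀*∘ι* + ι*∘C₁) equals 2·((μ₀μ₁ − ω₀²)/μ₁)·sym₀ + 2α₁·skew + (((3λ₁+2μ₁)(3λ₀+2μ₀) − (3β₀+2ω₀)²)/(3λ₁+2μ₁))·ℙ; consequently it is strictly positive definite if α₁ > 0, μ₀μ₁ − ω₀² > 0 and (3λ₁+2μ₁)(3λ₀+2μ₀) − (3β₀+2ω₀)² > 0. -/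

import Mathlib

noncomputable section

open Matrix

/-- The space of real `3 × 3` matrices. -/
abbrev M3 : Type := Matrix (Fin 3) (Fin 3) ℝ

/-- The Frobenius inner product `⟨σ, τ⟩ = trace (σᵀ * τ)` on `M3`. -/
def finner (σ τ : M3) : ℝ := (σᵀ * τ).trace

/-- The symmetric part map `sym τ = (τ + τᵀ)/2`. -/
def symM : M3 →ₗ[ℝ] M3 :=
  (2 : ℝ)⁻¹ • (LinearMap.id + (Matrix.transposeLinearEquiv (Fin 3) (Fin 3) ℝ ℝ).toLinearMap)

/-- The skew-symmetric part map `skew τ = (τ - τᵀ)/2`. -/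
def skewM : M3 →ₗ[ℝ] M3 :=
  (2 : ℝ)⁻¹ • (LinearMap.id - (Matrix.transposeLinearEquiv (Fin 3) (Fin 3) ℝ ℝ).toLinearMap)

/-- The volumetric (pressure) part `ℙ τ = (trace τ / 3) • I`. -/
def volP : M3 →ₗ[ℝ] M3 :=
  (Matrix.traceLinearMap (Fin 3) ℝ ℝ).smulRight ((3 : ℝ)⁻¹ • (1 : M3))

/-- The trace-free symmetric part `sym₀ = sym - ℙ`. -/
def sym0 : M3 →ₗ[ℝ] M3 := symM - volP
/-- The subspace of symmetric matrices, `τᵀ = τ`, i.e. `τᵀ - τ = 0`. -/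
def SymSub : Submodule ℝ M3 :=
  LinearMap.ker ((Matrix.transposeLinearEquiv (Fin 3) (Fin 3) ℝ ℝ).toLinearMap - LinearMap.id)

/-- The adjoint `ι*` of the inclusion `ι : Sym → M3`, i.e. `sym` with codomain `Sym`. -/
def symInto : M3 →ₗ[ℝ] SymSub :=
  LinearMap.codRestrict SymSub symM (fun c => by
    have h : (symM c)ᵀ = symM c := by
      simp [symM, Matrix.transpose_add, Matrix.transpose_smul, add_comm]
    simp [SymSub, LinearMap.mem_ker, h])

lemma symM_apply (τ : M3) : symM τ = (2 : ℝ)⁻¹ • (τ + τᵀ) := by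
  simp [symM, smul_add]

lemma skewM_apply (τ : M3) : skewM τ = (2 : ℝ)⁻¹ • (τ - τᵀ) := by
  simp [skewM, smul_sub]

lemma volP_apply (τ : M3) : volP τ = ((3:ℝ)⁻¹ * τ.trace) • (1 : M3) := by
  simp [volP, smul_smul, mul_comm]

lemma trace_one' : (1 : M3).trace = 3 := by simp

lemma trace_symM (τ : M3) : (symM τ).trace = τ.trace := by
  simp [symM_apply, trace_add, trace_smul]; ring

lemma trace_skewM (τ : M3) : (skewM τ).trace = 0 := by
  simp [skewM_apply]

lemma trace_volP (τ : M3) : (volP τ).trace = τ.trace := by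
  simp [volP_apply]; ring

lemma symM_symM (τ : M3) : symM (symM τ) = symM τ := by
  simp [symM_apply, transpose_add, transpose_smul, transpose_transpose, smul_add]
  module

lemma skewM_skewM (τ : M3) : skewM (skewM τ) = skewM τ := by
  simp [skewM_apply, transpose_sub, transpose_smul, transpose_transpose, smul_sub]
  module

lemma symM_skewM (τ : M3) : symM (skewM τ) = 0 := by
  simp [symM_apply, skewM_apply, transpose_sub, transpose_smul, transpose_transpose]

lemma skewM_symM (τ : M3) : skewM (symM τ) = 0 := by
  simp [symM_apply, skewM_apply, transpose_add, transpose_smul, transpose_transpose]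
  module

lemma volP_symM (τ : M3) : volP (symM τ) = volP τ := by
  simp [volP_apply, trace_symM]

lemma volP_skewM (τ : M3) : volP (skewM τ) = 0 := by
  simp [volP_apply, trace_skewM]

lemma volP_volP (τ : M3) : volP (volP τ) = volP τ := by
  simp [volP_apply (volP τ), trace_volP, volP_apply]

lemma symM_volP (τ : M3) : symM (volP τ) = volP τ := by
  rw [volP_apply, symM_apply]
  simp [transpose_smul]
  module

lemma skewM_volP (τ : M3) : skewM (volP τ) = 0 := by
  rw [volP_apply, skewM_apply]
  simp [transpose_smul]

lemma mem_symSub {s : M3} (hs : s ∈ SymSub) : sᵀ = s := by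
  have := hs
  simp [SymSub, LinearMap.mem_ker, sub_eq_zero] at this
  exact this

lemma coe_symInto (τ : M3) : (symInto τ : M3) = symM τ := rfl

lemma symM_coe (s : SymSub) : symM (s : M3) = (s : M3) := by
  rw [symM_apply, mem_symSub s.2]; module

lemma symInto_coe (s : SymSub) : symInto (s : M3) = s := by
  apply Subtype.ext; rw [coe_symInto, symM_coe]

lemma skewM_coe (s : SymSub) : skewM (s : M3) = 0 := by
  rw [skewM_apply, mem_symSub s.2]; simp

-- finner lemmas

lemma finner_add_right (σ τ₁ τ₂ : M3) : finner σ (τ₁ + τ₂) = finner σ τ₁ + finner σ τ₂ := by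
  simp [finner, Matrix.mul_add, trace_add]

lemma finner_sub_right (σ τ₁ τ₂ : M3) : finner σ (τ₁ - τ₂) = finner σ τ₁ - finner σ τ₂ := by
  simp [finner, Matrix.mul_sub, trace_sub]

lemma finner_smul_right (r : ℝ) (σ τ : M3) : finner σ (r • τ) = r * finner σ τ := by
  simp [finner, Matrix.mul_smul, trace_smul]

lemma finner_comm (σ τ : M3) : finner σ τ = finner τ σ := by
  rw [finner, finner, ← trace_transpose (τᵀ * σ)]
  rw [transpose_mul, transpose_transpose, trace_mul_comm]

lemma finner_symM_right (σ τ : M3) : finner σ (symM τ) = finner (symM σ) τ := by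
  rw [symM_apply, symM_apply, finner, finner]
  rw [transpose_smul, Matrix.mul_smul, Matrix.smul_mul, trace_smul, trace_smul]
  congr 1
  rw [Matrix.mul_add, transpose_add, Matrix.add_mul, trace_add, trace_add, transpose_transpose]
  congr 1
  rw [← trace_transpose (σᵀ * τᵀ), transpose_mul, transpose_transpose, trace_mul_comm]
  rw [transpose_transpose]

lemma finner_skewM_right (σ τ : M3) : finner σ (skewM τ) = finner (skewM σ) τ := by
  rw [skewM_apply, skewM_apply, finner, finner]
  rw [transpose_smul, Matrix.mul_smul, Matrix.smul_mul, trace_smul, trace_smul]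
  congr 1
  rw [Matrix.mul_sub, transpose_sub, Matrix.sub_mul, trace_sub, trace_sub, transpose_transpose]
  congr 1
  rw [← trace_transpose (σᵀ * τᵀ), transpose_mul, transpose_transpose, trace_mul_comm]
  rw [transpose_transpose]

lemma finner_one_right (σ : M3) : finner σ 1 = σ.trace := by
  simp [finner, trace_transpose]

lemma finner_volP_right (σ τ : M3) : finner σ (volP τ) = finner (volP σ) τ := by
  rw [volP_apply, volP_apply, finner_smul_right, finner_one_right σ]
  have h2 : finner ((3⁻¹ * trace σ) • (1:M3)) τ = (3⁻¹ * trace σ) * finner (1:M3) τ := by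
    rw [finner_comm, finner_smul_right, finner_comm]
  rw [h2]
  have : finner (1:M3) τ = τ.trace := by rw [finner_comm, finner_one_right]
  rw [this]
  ring

lemma finner_self_nonneg (τ : M3) : 0 ≤ finner τ τ := by
  have : finner τ τ = ∑ j : Fin 3, ∑ i : Fin 3, (τ i j)^2 := by
    simp [finner, Matrix.trace, Matrix.mul_apply, Matrix.diag, sq]
  rw [this]; positivity

lemma finner_self_eq_zero {τ : M3} (h : finner τ τ = 0) : τ = 0 := by
  have he : finner τ τ = ∑ j : Fin 3, ∑ i : Fin 3, (τ i j)^2 := by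
    simp [finner, Matrix.trace, Matrix.mul_apply, Matrix.diag, sq]
  rw [he] at h
  ext i j
  have h1 := (Finset.sum_eq_zero_iff_of_nonneg (fun j _ => by positivity)).1 h j (Finset.mem_univ j)
  have h2 := (Finset.sum_eq_zero_iff_of_nonneg (fun i _ => by positivity)).1 h1 i (Finset.mem_univ i)
  simpa using pow_eq_zero_iff (n := 2) (by norm_num) |>.1 h2

lemma finner_ext {y z : M3} (h : ∀ x, finner x y = finner x z) : y = z := by
  have h0 : finner (y - z) (y - z) = 0 := by
    rw [finner_sub_right]
    have := h (y - z)
    linarith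
  exact sub_eq_zero.mp (finner_self_eq_zero h0)


-- self-adjointness packaged

lemma finner_sym0_right (σ τ : M3) : finner σ (sym0 τ) = finner (sym0 σ) τ := by
  have : ∀ x : M3, sym0 x = symM x - volP x := fun x => rfl
  rw [this, this, finner_sub_right, finner_symM_right, finner_volP_right, finner_comm (symM σ - volP σ) τ,
    finner_sub_right, finner_comm τ (symM σ), finner_comm τ (volP σ)]

lemma sym0_apply (τ : M3) : sym0 τ = symM τ - volP τ := rfl

lemma sym0_sym0 (τ : M3) : sym0 (sym0 τ) = sym0 τ := by
  simp only [sym0_apply, map_sub, symM_symM, symM_volP, volP_symM, volP_volP, sub_self, sub_zero]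

lemma decomp (τ : M3) : sym0 τ + skewM τ + volP τ = τ := by
  rw [sym0_apply, symM_apply, skewM_apply]
  module

lemma finner_self_pos {σ : M3} (h : σ ≠ 0) : 0 < finner σ σ :=
  lt_of_le_of_ne (finner_self_nonneg σ) (fun h0 => h (finner_self_eq_zero h0.symm))

lemma G0star_eq (ω₀ β₀ : ℝ)
    (G₀star : SymSub →ₗ[ℝ] M3)
    (hG₀star : ∀ (x : M3) (s : SymSub),
      finner ((symInto ∘ₗ ((2 * ω₀) • sym0 + (3 * β₀ + 2 * ω₀) • volP)) x : M3) (s : M3) =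
        finner x (G₀star s)) :
    G₀star = ((2 * ω₀) • sym0 + (3 * β₀ + 2 * ω₀) • volP) ∘ₗ SymSub.subtype := by
  refine LinearMap.ext fun s => ?_
  apply finner_ext
  intro x
  rw [← hG₀star x s]
  have h1 : ((symInto ∘ₗ ((2 * ω₀) • sym0 + (3 * β₀ + 2 * ω₀) • volP)) x : M3)
      = (2 * ω₀) • sym0 x + (3 * β₀ + 2 * ω₀) • volP x := by
    rw [LinearMap.comp_apply, coe_symInto]
    simp only [LinearMap.add_apply, LinearMap.smul_apply, map_add, LinearMap.map_smul]
    rw [show symM (sym0 x) = sym0 x from ?_, symM_volP]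
    show symM (symM x - volP x) = _
    rw [map_sub, symM_symM, symM_volP]; rfl
  rw [h1, finner_comm _ (s:M3), finner_add_right, finner_smul_right, finner_smul_right,
    finner_sym0_right, finner_volP_right, finner_comm _ x, finner_comm _ x,
    ← finner_smul_right, ← finner_smul_right, ← finner_add_right]
  simp [finner_smul_right]

lemma Cinv_eq (μ₁ α₁ lam₁ : ℝ) (hμ₁ : 0 < μ₁) (hlam₁ : 0 < lam₁ + (2 / 3) * μ₁)
    (Cinv : SymSub →ₗ[ℝ] SymSub)
    (hCinv₂ : Cinv ∘ₗ (symInto ∘ₗ ((2 * μ₁) • sym0 + (2 * α₁) • skewM +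
        (3 * lam₁ + 2 * μ₁) • volP) ∘ₗ SymSub.subtype) = LinearMap.id) :
    Cinv = symInto ∘ₗ ((2 * μ₁)⁻¹ • sym0 + (3 * lam₁ + 2 * μ₁)⁻¹ • volP) ∘ₗ SymSub.subtype := by
  have hm : (2 * μ₁) ≠ 0 := by positivity
  have hc : (3 * lam₁ + 2 * μ₁) ≠ 0 := by nlinarith
  set B := symInto ∘ₗ ((2 * μ₁)⁻¹ • sym0 + (3 * lam₁ + 2 * μ₁)⁻¹ • volP) ∘ₗ SymSub.subtype with hB
  set D := symInto ∘ₗ ((2 * μ₁) • sym0 + (2 * α₁) • skewM +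
      (3 * lam₁ + 2 * μ₁) • volP) ∘ₗ SymSub.subtype with hD
  have hDB : D ∘ₗ B = LinearMap.id := by
    refine LinearMap.ext fun s => ?_
    apply Subtype.ext
    simp only [hB, hD, LinearMap.comp_apply, LinearMap.id_apply, Submodule.coe_subtype,
      LinearMap.add_apply, LinearMap.smul_apply, coe_symInto, sym0_apply,
      map_add, map_sub, LinearMap.map_smul, smul_sub, smul_smul,
      symM_symM, symM_volP, volP_symM, volP_volP, skewM_symM, skewM_volP,
      symM_coe, skewM_coe, smul_zero, sub_zero, add_zero, zero_add, zero_sub, sub_self]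
    simp only [Submodule.coe_add, Submodule.coe_smul, AddSubgroupClass.coe_sub, coe_symInto,
      symM_coe, symM_volP]
    ext i j
    simp only [Matrix.add_apply, Matrix.sub_apply, Matrix.smul_apply, smul_eq_mul]
    field_simp
    ring
  have h1 : (Cinv ∘ₗ D) ∘ₗ B = B := by rw [hCinv₂, LinearMap.id_comp]
  rw [LinearMap.comp_assoc, hDB, LinearMap.comp_id] at h1
  exact h1

lemma pos_of_coeffs (x a y : ℝ) (hx : 0 < x) (ha : 0 < a) (hy : 0 < y) (τ : M3) (hτ : τ ≠ 0) :
    0 < finner τ ((x • sym0 + a • skewM + y • volP) τ) := by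
  have e1 : finner τ (sym0 τ) = finner (sym0 τ) (sym0 τ) := by
    conv_lhs => rw [← sym0_sym0, finner_sym0_right]
  have e2 : finner τ (skewM τ) = finner (skewM τ) (skewM τ) := by
    conv_lhs => rw [← skewM_skewM, finner_skewM_right]
  have e3 : finner τ (volP τ) = finner (volP τ) (volP τ) := by
    conv_lhs => rw [← volP_volP, finner_volP_right]
  have hrw : finner τ ((x • sym0 + a • skewM + y • volP) τ)
      = x * finner (sym0 τ) (sym0 τ) + a * finner (skewM τ) (skewM τ)
        + y * finner (volP τ) (volP τ) := by
    simp only [LinearMap.add_apply, LinearMap.smul_apply, finner_add_right, finner_smul_right,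
      e1, e2, e3]
  rw [hrw]
  have n1 := finner_self_nonneg (sym0 τ)
  have n2 := finner_self_nonneg (skewM τ)
  have n3 := finner_self_nonneg (volP τ)
  have : sym0 τ ≠ 0 ∨ skewM τ ≠ 0 ∨ volP τ ≠ 0 := by
    by_contra hcon
    push_neg at hcon
    apply hτ
    rw [← decomp τ, hcon.1, hcon.2.1, hcon.2.2]
    simp
  rcases this with h | h | h
  · have := finner_self_pos h; nlinarith
  · have := finner_self_pos h; nlinarith
  · have := finner_self_pos h; nlinarith


/-- The operator
`ι C₀ ι* + G₀* ι* + ι G₀ + C₁ − (ι G₀ ι + C₁ ι)(ι* C₁ ι)⁻¹(ι* G₀* ι* + ι* C₁)`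
of statement 18, where `C₀ = ι*(2μ₀·sym₀ + (3λ₀+2μ₀)·ℙ)ι`,
`G₀ = ι*(2ω₀·sym₀ + (3β₀+2ω₀)·ℙ)`, `C₁ = 2μ₁·sym₀ + 2α₁·skew + (3λ₁+2μ₁)·ℙ`,
`G₀star` is the adjoint of `G₀` and `Cinv` the inverse of `ι* C₁ ι`. -/
def bigOp (μ₀ lam₀ ω₀ β₀ μ₁ α₁ lam₁ : ℝ) (G₀star : SymSub →ₗ[ℝ] M3)
    (Cinv : SymSub →ₗ[ℝ] SymSub) : M3 →ₗ[ℝ] M3 :=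
  SymSub.subtype ∘ₗ
      (symInto ∘ₗ ((2 * μ₀) • sym0 + (3 * lam₀ + 2 * μ₀) • volP) ∘ₗ SymSub.subtype) ∘ₗ
      symInto +
    G₀star ∘ₗ symInto +
    SymSub.subtype ∘ₗ (symInto ∘ₗ ((2 * ω₀) • sym0 + (3 * β₀ + 2 * ω₀) • volP)) +
    ((2 * μ₁) • sym0 + (2 * α₁) • skewM + (3 * lam₁ + 2 * μ₁) • volP) -
    (SymSub.subtype ∘ₗ
        (symInto ∘ₗ ((2 * ω₀) • sym0 + (3 * β₀ + 2 * ω₀) • volP)) ∘ₗ SymSub.subtype +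
      ((2 * μ₁) • sym0 + (2 * α₁) • skewM + (3 * lam₁ + 2 * μ₁) • volP) ∘ₗ
        SymSub.subtype) ∘ₗ
      Cinv ∘ₗ
      (symInto ∘ₗ G₀star ∘ₗ symInto +
        symInto ∘ₗ ((2 * μ₁) • sym0 + (2 * α₁) • skewM + (3 * lam₁ + 2 * μ₁) • volP))

lemma bigOp_eq (μ₀ lam₀ ω₀ β₀ μ₁ α₁ lam₁ : ℝ) (hμ₁ : 0 < μ₁) (hlam₁ : 0 < lam₁ + (2 / 3) * μ₁) :
    bigOp μ₀ lam₀ ω₀ β₀ μ₁ α₁ lam₁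
        (((2 * ω₀) • sym0 + (3 * β₀ + 2 * ω₀) • volP) ∘ₗ SymSub.subtype)
        (symInto ∘ₗ ((2 * μ₁)⁻¹ • sym0 + (3 * lam₁ + 2 * μ₁)⁻¹ • volP) ∘ₗ SymSub.subtype) =
        (2 * ((μ₀ * μ₁ - ω₀ ^ 2) / μ₁)) • sym0 + (2 * α₁) • skewM +
          (((3 * lam₁ + 2 * μ₁) * (3 * lam₀ + 2 * μ₀) - (3 * β₀ + 2 * ω₀) ^ 2) /
              (3 * lam₁ + 2 * μ₁)) • volP := by
  have hm : (2 * μ₁) ≠ 0 := by positivity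
  have hμ : μ₁ ≠ 0 := ne_of_gt hμ₁
  have hc : (3 * lam₁ + 2 * μ₁) ≠ 0 := by nlinarith
  refine LinearMap.ext fun τ => ?_
  simp only [bigOp, LinearMap.comp_apply, LinearMap.add_apply, LinearMap.sub_apply,
    LinearMap.smul_apply, Submodule.coe_subtype, coe_symInto, sym0_apply,
    map_add, map_sub, LinearMap.map_smul, smul_sub, smul_smul, smul_add,
    symM_symM, symM_volP, volP_symM, volP_volP, skewM_symM, skewM_volP, symM_skewM,
    skewM_skewM, volP_skewM,
    Submodule.coe_add, Submodule.coe_smul, AddSubgroupClass.coe_sub,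
    smul_zero, sub_zero, add_zero, zero_add, zero_sub, sub_self, map_zero]
  ext i j
  simp only [Matrix.add_apply, Matrix.sub_apply, Matrix.smul_apply, smul_eq_mul,
    Matrix.zero_apply, Matrix.neg_apply]
  field_simp
  ring

/-- The Schur-type operator of the micromorphic model equals the
stated isotropic expression, and is strictly positive definite provided `α₁ > 0`,
`μ₀μ₁ − ω₀² > 0` and `(3λ₁+2μ₁)(3λ₀+2μ₀) − (3β₀+2ω₀)² > 0`. -/
theorem micromorphic_schur_formula (μ₀ lam₀ ω₀ β₀ μ₁ α₁ lam₁ : ℝ)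
    (hμ₁ : 0 < μ₁) (hlam₁ : 0 < lam₁ + (2 / 3) * μ₁)
    (G₀star : SymSub →ₗ[ℝ] M3)
    (hG₀star : ∀ (x : M3) (s : SymSub),
      finner ((symInto ∘ₗ ((2 * ω₀) • sym0 + (3 * β₀ + 2 * ω₀) • volP)) x : M3) (s : M3) =
        finner x (G₀star s))
    (Cinv : SymSub →ₗ[ℝ] SymSub)
    (hCinv₁ : (symInto ∘ₗ ((2 * μ₁) • sym0 + (2 * α₁) • skewM +
        (3 * lam₁ + 2 * μ₁) • volP) ∘ₗ SymSub.subtype) ∘ₗ Cinv = LinearMap.id)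
    (hCinv₂ : Cinv ∘ₗ (symInto ∘ₗ ((2 * μ₁) • sym0 + (2 * α₁) • skewM +
        (3 * lam₁ + 2 * μ₁) • volP) ∘ₗ SymSub.subtype) = LinearMap.id) :
    bigOp μ₀ lam₀ ω₀ β₀ μ₁ α₁ lam₁ G₀star Cinv =
        (2 * ((μ₀ * μ₁ - ω₀ ^ 2) / μ₁)) • sym0 + (2 * α₁) • skewM +
          (((3 * lam₁ + 2 * μ₁) * (3 * lam₀ + 2 * μ₀) - (3 * β₀ + 2 * ω₀) ^ 2) /
              (3 * lam₁ + 2 * μ₁)) • volP ∧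
      ((0 < α₁ ∧ 0 < μ₀ * μ₁ - ω₀ ^ 2 ∧
          0 < (3 * lam₁ + 2 * μ₁) * (3 * lam₀ + 2 * μ₀) - (3 * β₀ + 2 * ω₀) ^ 2) →
        ∀ τ : M3, τ ≠ 0 → 0 < finner τ (bigOp μ₀ lam₀ ω₀ β₀ μ₁ α₁ lam₁ G₀star Cinv τ)) := by
  have hm : (2 * μ₁) ≠ 0 := by positivity
  have hμ : μ₁ ≠ 0 := ne_of_gt hμ₁
  have hcpos : 0 < (3 * lam₁ + 2 * μ₁) := by nlinarith
  have hG : G₀star = ((2 * ω₀) • sym0 + (3 * β₀ + 2 * ω₀) • volP) ∘ₗ SymSub.subtype :=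
    G0star_eq ω₀ β₀ G₀star hG₀star
  have hC : Cinv = symInto ∘ₗ ((2 * μ₁)⁻¹ • sym0 + (3 * lam₁ + 2 * μ₁)⁻¹ • volP) ∘ₗ
      SymSub.subtype := Cinv_eq μ₁ α₁ lam₁ hμ₁ hlam₁ Cinv hCinv₂
  have hbig := bigOp_eq μ₀ lam₀ ω₀ β₀ μ₁ α₁ lam₁ hμ₁ hlam₁
  rw [hG, hC]
  refine ⟨hbig, ?_⟩
  rintro ⟨hα, hx, hy⟩ τ hτ
  rw [hbig]
  exact pos_of_coeffs _ _ _ (by positivity) (by positivity) (by positivity) τ hτ
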